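/- Let (g, ⟨,⟩) be a pseudo-Riemannian flat Lie algebra and u ∈ g with u·u = 0. Then for every positive integer k, [R_u^k, L_u] = k·R_u^{k+1}, where R_u and L_u are right and left multiplication by u for the Levi-Civita product. -/

import Mathlib

/-- In a pseudo-Riemannian flat Lie algebra, if `u·u = 0`, then for every
positive integer `k`, `[R_u^k, L_u] = k • R_u^{k+1}`. -/
theorem flat_right_mul_commutator_power
    (g : Type*) [LieRing g] [LieAlgebra ℝ g] [FiniteDimensional ℝ g]
    (B : LinearMap.BilinForm ℝ g)
    (hsymm : ∀ x y, B x y = B y x)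
    (hnd : B.Nondegenerate)
    (m : g →ₗ[ℝ] g →ₗ[ℝ] g)
    (koszul : ∀ u v w, 2 * B (m u v) w = B ⁅u, v⁆ w + B ⁅w, u⁆ v + B ⁅w, v⁆ u)
    (hflat : ∀ u v x, m ⁅u, v⁆ x = m u (m v x) - m v (m u x))
    (u : g) (huu : m u u = 0) :
    ∀ k : ℕ, 1 ≤ k →
      ((m.flip u : Module.End ℝ g) ^ k) * (m u : Module.End ℝ g)
        - (m u : Module.End ℝ g) * ((m.flip u : Module.End ℝ g) ^ k)
      = (k : ℝ) • ((m.flip u : Module.End ℝ g) ^ (k + 1)) := by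
  -- torsion-freeness
  have tf : ∀ a b : g, m a b - m b a = ⁅a, b⁆ := by
    intro a b
    have h : ∀ w, B (m a b - m b a - ⁅a, b⁆) w = 0 := by
      intro w
      have h1 := koszul a b w
      have h2 := koszul b a w
      have hlie : (⁅b, a⁆ : g) = -⁅a, b⁆ := by rw [← lie_skew]
      simp only [map_sub, LinearMap.sub_apply, hlie, map_neg, LinearMap.neg_apply] at *
      linarith
    have := hnd.1 _ h
    rwa [sub_eq_zero] at this
  -- key pointwise identity: (u·x)·u - u·(x·u) = (x·u)·u
  have key : ∀ x : g, m (m u x) u - m u (m x u) = m (m x u) u := by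
    intro x
    have h := hflat u x u
    rw [← tf u x] at h
    simp only [map_sub, LinearMap.sub_apply, huu, map_zero] at h
    -- h : m (m u x) u - m (m x u) u = m u (m x u) - 0
    rw [sub_zero] at h
    rw [sub_eq_iff_eq_add] at h ⊢
    rw [h]; abel
  set R : Module.End ℝ g := m.flip u with hR
  set L : Module.End ℝ g := m u with hL
  have base : R * L - L * R = R * R := by
    ext x
    simpa [hR, hL, Module.End.mul_apply] using key x
  intro k hk
  induction k, hk using Nat.le_induction with
  | base =>
    simpa [pow_succ, pow_one] using base
  | succ n hn ih =>
    have expand : R ^ (n + 1) * L - L * R ^ (n + 1)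
        = R ^ n * (R * L - L * R) + (R ^ n * L - L * R ^ n) * R := by
      rw [pow_succ]; noncomm_ring
    rw [expand, base, ih]
    push_cast
    rw [smul_mul_assoc, ← pow_succ, ← mul_assoc, ← pow_succ, ← pow_succ]
    rw [add_smul, one_smul]
    abel
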